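/- Every trajectory coordination query between distinct endpoints of a valid infrastructure is solvable. Suppose W ⊆ ℝ² together with a set of endpoints E ⊆ ℝ² is a valid infrastructure for radius r > 0. Let robots 1,…,n have radii r_1,…,r_n with 0 < r_i ≤ r, maximum speeds v_1,…,v_n > 0, and tasks ⟨s_i,g_i⟩ with s_i, g_i ∈ E, such that the starts s_1,…,s_n are pairwise distinct, the goals g_1,…,g_n are pairwise distinct, and s_i ≠ g_j whenever i ≠ j. Then there exist trajectories π_1,…,π_n such that each π_i is satisfying for robot i and every two distinct trajectories π_i, π_j are conflict-free. -/

import Mathlib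

open Metric Set
open scoped NNReal

local notation "Pt" => EuclideanSpace ℝ (Fin 2)

/-- A workspace `W` with endpoints `E` is a valid infrastructure for radius `r` if
any two endpoints `e, e'` are connected by a Lipschitz path lying in the
`r`-interior of `W` minus the `r`-balls around all other endpoints. -/
def ValidInfrastructure (W E : Set Pt) (r : ℝ) : Prop :=
  ∀ e ∈ E, ∀ e' ∈ E, ∃ p : ℝ → Pt,
    (∃ L : ℝ≥0, LipschitzOnWith L p (Icc 0 1)) ∧
    p 0 = e ∧ p 1 = e' ∧
    ∀ u ∈ Icc (0:ℝ) 1,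
      closedBall (p u) r ⊆ W \ ⋃ f ∈ E \ {e, e'}, closedBall f r

private lemma lipschitzOnWith_weaken {α β : Type*} [PseudoEMetricSpace α]
    [PseudoEMetricSpace β] {K K' : ℝ≥0} {f : α → β} {s : Set α}
    (hf : LipschitzOnWith K f s) (h : K ≤ K') : LipschitzOnWith K' f s := by
  intro x hx y hy
  exact (hf hx hy).trans (mul_le_mul_left (ENNReal.coe_le_coe.2 h) _)

/-- Every trajectory coordination query between distinct endpoints of a valid
infrastructure is solvable: there exist pairwise conflict-free satisfying
trajectories for all robots. -/
theorem valid_infrastructure_coordination_solvable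
    (W E : Set Pt) (r : ℝ) (hr : 0 < r)
    (hinfra : ValidInfrastructure W E r)
    (n : ℕ) (rad : Fin n → ℝ) (v : Fin n → ℝ≥0) (s g : Fin n → Pt)
    (hrad : ∀ i, 0 < rad i ∧ rad i ≤ r) (hv : ∀ i, 0 < v i)
    (hsE : ∀ i, s i ∈ E) (hgE : ∀ i, g i ∈ E)
    (hs : ∀ i j, i ≠ j → s i ≠ s j)
    (hg : ∀ i j, i ≠ j → g i ≠ g j)
    (hsg : ∀ i j, i ≠ j → s i ≠ g j) :
    ∃ π : Fin n → ℝ → Pt,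
      (∀ i, π i 0 = s i ∧
        (∃ T : ℝ, 0 ≤ T ∧ ∀ t ≥ T, π i t = g i) ∧
        (∀ t : ℝ, 0 ≤ t → closedBall (π i t) (rad i) ⊆ W) ∧
        LipschitzOnWith (v i) (π i) (Ici 0)) ∧
      (∀ i j, i ≠ j → ∀ t : ℝ, 0 ≤ t →
        closedBall (π i t) (rad i) ∩ closedBall (π j t) (rad j) = ∅) := by
  classical
  -- choose paths
  choose p hpLip hp0 hp1 hpsub using fun i => hinfra (s i) (hsE i) (g i) (hgE i)
  choose L hL using hpLip
  -- durations and start times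
  set d : Fin n → ℝ := fun i => ((L i : ℝ) + 1) / (v i : ℝ) with hd_def
  have hd : ∀ i, 0 < d i := fun i => by
    apply div_pos (by positivity)
    exact_mod_cast hv i
  set a : Fin n → ℝ := fun i => ∑ j ∈ Finset.Iio i, d j with ha_def
  have ha0 : ∀ i, 0 ≤ a i := fun i =>
    Finset.sum_nonneg fun j _ => (hd j).le
  have hwindow : ∀ i j : Fin n, i < j → a i + d i ≤ a j := by
    intro i j hij
    have h1 : a i + d i = ∑ k ∈ insert i (Finset.Iio i), d k := by
      rw [Finset.sum_insert (by simp)]; ring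
    rw [h1]
    apply Finset.sum_le_sum_of_subset_of_nonneg
    · intro k hk
      simp only [Finset.mem_insert, Finset.mem_Iio] at hk ⊢
      rcases hk with rfl | hk
      · exact hij
      · exact hk.trans hij
    · intro k _ _; exact (hd k).le
  -- clamped time reparametrization
  set c : Fin n → ℝ → ℝ := fun i t => max 0 (min 1 ((t - a i) / d i)) with hc_def
  have hc_mem : ∀ i t, c i t ∈ Icc (0:ℝ) 1 := by
    intro i t
    constructor
    · exact le_max_left _ _
    · exact max_le zero_le_one (min_le_left _ _)
  have hc_le : ∀ i t, t ≤ a i → c i t = 0 := by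
    intro i t ht
    have hx : (t - a i) / d i ≤ 0 :=
      div_nonpos_of_nonpos_of_nonneg (by linarith) (hd i).le
    simp only [hc_def]
    rw [min_eq_right (hx.trans zero_le_one), max_eq_left hx]
  have hc_ge : ∀ i t, a i + d i ≤ t → c i t = 1 := by
    intro i t ht
    have hx : (1:ℝ) ≤ (t - a i) / d i := by
      rw [le_div_iff₀ (hd i)]; linarith
    simp only [hc_def]
    rw [min_eq_left hx, max_eq_right zero_le_one]
  -- the trajectories
  refine ⟨fun i t => p i (c i t), fun i => ⟨?_, ⟨a i + d i, ?_, ?_⟩, ?_, ?_⟩, ?_⟩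
  · show p i (c i 0) = s i
    rw [hc_le i 0 (ha0 i), hp0]
  · exact add_nonneg (ha0 i) (hd i).le
  · intro t ht; show p i (c i t) = g i; rw [hc_ge i t ht, hp1]
  · intro t _
    exact (closedBall_subset_closedBall (hrad i).2).trans
      ((hpsub i _ (hc_mem i t)).trans (diff_subset))
  · -- Lipschitz
    have hcLip : LipschitzWith (v i / (L i + 1)) (c i) := by
      apply LipschitzWith.of_dist_le_mul
      intro x y
      simp only [Real.dist_eq, hc_def]
      have h1 : |c i x - c i y| ≤ |(x - a i) / d i - (y - a i) / d i| := by
        calc |c i x - c i y| ≤ |min 1 ((x - a i) / d i) - min 1 ((y - a i) / d i)| := by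
              simpa [max_comm] using
                abs_max_sub_max_le_abs (min 1 ((x - a i) / d i)) (min 1 ((y - a i) / d i)) 0
          _ ≤ |(x - a i) / d i - (y - a i) / d i| := by
              simpa using abs_min_sub_min_le_max 1 ((x - a i) / d i) 1 ((y - a i) / d i)
      have h2 : |(x - a i) / d i - (y - a i) / d i| = |x - y| / d i := by
        rw [div_sub_div_same, abs_div, abs_of_pos (hd i)]; ring_nf
      have h3 : ((v i / (L i + 1) : ℝ≥0) : ℝ) = 1 / d i := by
        push_cast
        rw [hd_def]
        field_simp
      calc |c i x - c i y| ≤ |x - y| / d i := h1.trans_eq h2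
        _ = ((v i / (L i + 1) : ℝ≥0) : ℝ) * |x - y| := by rw [h3]; ring
    have hcomp : LipschitzOnWith (L i * (v i / (L i + 1)))
        (fun t => p i (c i t)) (Ici 0) := by
      exact (hL i).comp (hcLip.lipschitzOnWith) (fun t _ => hc_mem i t)
    apply lipschitzOnWith_weaken hcomp
    rw [mul_div_assoc']
    rw [div_le_iff₀ (by positivity), mul_comm (v i)]
    exact mul_le_mul_of_nonneg_right (le_add_of_nonneg_right zero_le_one) (by positivity)
  · -- conflict-freeness
    -- helper: the moving robot's ball avoids the ball around any other endpoint
    have key : ∀ i j : Fin n, ∀ t : ℝ, ∀ f : Pt, f ∈ E → f ≠ s i → f ≠ g i →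
        closedBall f (rad j) ⊆ closedBall f r →
        closedBall (p i (c i t)) (rad i) ∩ closedBall f (rad j) = ∅ := by
      intro i j t f hfE hfs hfg hball
      rw [eq_empty_iff_forall_notMem]
      rintro x ⟨hx1, hx2⟩
      have hx1' : x ∈ W \ ⋃ f ∈ E \ {s i, g i}, closedBall f r :=
        hpsub i _ (hc_mem i t) (closedBall_subset_closedBall (hrad i).2 hx1)
      apply hx1'.2
      apply mem_biUnion (show f ∈ E \ {s i, g i} by
        simp only [mem_diff, mem_insert_iff, mem_singleton_iff]
        exact ⟨hfE, by tauto⟩)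
      exact hball hx2
    intro i j hij t _
    show closedBall (p i (c i t)) (rad i) ∩ closedBall (p j (c j t)) (rad j) = ∅
    by_cases hj : t ≤ a j ∨ a j + d j ≤ t
    · -- robot j is at an endpoint
      have : p j (c j t) = s j ∨ p j (c j t) = g j := by
        rcases hj with hj | hj
        · left; rw [hc_le j t hj, hp0]
        · right; rw [hc_ge j t hj, hp1]
      rcases this with h | h
      · rw [h]
        exact key i j t (s j) (hsE j) (hs j i hij.symm)
          (fun he => hsg j i hij.symm he) (closedBall_subset_closedBall (hrad j).2)
      · rw [h]
        exact key i j t (g j) (hgE j) (fun he => hsg i j hij he.symm)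
          (fun he => hg i j hij he.symm) (closedBall_subset_closedBall (hrad j).2)
    · -- robot j is strictly moving, so robot i is at an endpoint
      push_neg at hj
      have hi : p i (c i t) = s i ∨ p i (c i t) = g i := by
        rcases lt_or_gt_of_ne hij with h | h
        · right
          rw [hc_ge i t (le_of_lt ((hwindow i j h).trans_lt hj.1)), hp1]
        · left
          rw [hc_le i t (le_of_lt (hj.2.trans_le (hwindow j i h))), hp0]
      rw [inter_comm]
      rcases hi with h | h
      · rw [h]
        exact key j i t (s i) (hsE i) (hs i j hij)
          (hsg i j hij) (closedBall_subset_closedBall (hrad i).2)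
      · rw [h]
        exact key j i t (g i) (hgE i) ((hsg j i hij.symm).symm)
          (hg i j hij) (closedBall_subset_closedBall (hrad i).2)
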